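/- Let m be an exponential on a commutative group G (so m(x) ≠ 0 for all x) and let s be an m-sine function. Then the functions (m, s, s²/m) satisfy the moment relation of order 2: (s²/m)(x*y) = (s²/m)(x)·m(y) + 2·s(x)·s(y) + m(x)·(s²/m)(y); i.e. m, s, s²/m form a generalized moment function sequence of order 2. -/
import Mathlib


/-- If `m` is an exponential on a commutative group `G` and `s` is an `m`-sine
function, then `m, s, s²/m` form a generalized moment function sequence of
order `2`: `(s²/m)(x*y) = (s²/m) x * m y + 2 * s x * s y + m x * (s²/m) y`. -/
theorem sq_div_is_second_moment {G : Type*} [CommGroup G] (m s : G → ℂ)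
    (hmne : m ≠ 0) (hmul : ∀ x y : G, m (x * y) = m x * m y)
    (hs : ∀ x y : G, s (x * y) = s x * m y + m x * s y) :
    ∀ x y : G, s (x * y) ^ 2 / m (x * y)
      = (s x ^ 2 / m x) * m y + 2 * s x * s y + m x * (s y ^ 2 / m y) := by
  have hne : ∀ x : G, m x ≠ 0 := by
    intro x hx
    apply hmne
    funext z
    have : m (x * (x⁻¹ * z)) = m x * m (x⁻¹ * z) := hmul _ _
    simpa [hx, mul_assoc] using this
  intro x y
  rw [hs, hmul]
  have hx := hne x
  have hy := hne y
  field_simp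
  ring
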